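/- In the skew-self-adjoint setting with w_A(k, λ) = I_m - i Π_k* S_k⁻¹ (A - λI)⁻¹ Π_k, Π_k = [(I + iA⁻¹)^k ϑ₁, (I - iA⁻¹)^k ϑ₂], Q_k = (I - iA⁻¹)^{-k} S_k (I + i(A*)⁻¹)^{-k}, and G̃(A) = (A - iI)⁻¹(A + iI), one has the column representation: w_A(k, -z) [0; I_{m₂}] = [0; I_{m₂}] - i [ϑ₁* (G̃(A)^k)* Q_k⁻¹ (zI + A)⁻¹ ϑ₂ ; ϑ₂* Q_k⁻¹ (zI + A)⁻¹ ϑ₂]. -/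

import Mathlib

open Matrix Complex
open scoped ComplexOrder

private lemma aux_comm {n : ℕ} {X Y : Matrix (Fin n) (Fin n) ℂ}
    (h : Commute X Y) (hY : IsUnit Y.det) : Commute X Y⁻¹ := by
  have hc : X * Y⁻¹ = Y⁻¹ * Y * X * Y⁻¹ := by
    rw [Matrix.nonsing_inv_mul _ hY, one_mul]
  rw [Commute, SemiconjBy] at h ⊢
  rw [hc, mul_assoc Y⁻¹ Y X, ← h, ← mul_assoc, mul_assoc _ Y Y⁻¹,
    Matrix.mul_nonsing_inv _ hY, mul_one]

set_option maxHeartbeats 2000000 in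
/-- Column representation (R13) of w_A(k, -z) applied to [0; I_{m₂}]
in the skew-self-adjoint setting. -/
theorem stmt14 (n m₁ m₂ : ℕ) (hn : 0 < n)
    (A : Matrix (Fin n) (Fin n) ℂ) (hA : IsUnit A.det)
    (hi : Complex.I ∉ spectrum ℂ A) (hmi : -Complex.I ∉ spectrum ℂ A)
    (θ₁ : Matrix (Fin n) (Fin m₁) ℂ) (θ₂ : Matrix (Fin n) (Fin m₂) ℂ)
    (P : ℕ → Matrix (Fin n) (Fin m₁ ⊕ Fin m₂) ℂ)
    (hPdef : ∀ r, P r = Matrix.fromCols ((1 + Complex.I • A⁻¹) ^ r * θ₁)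
      ((1 - Complex.I • A⁻¹) ^ r * θ₂))
    (S : ℕ → Matrix (Fin n) (Fin n) ℂ) (hSpos : ∀ r, (S r).PosDef)
    (Q : ℕ → Matrix (Fin n) (Fin n) ℂ)
    (hQ : ∀ r, Q r = ((1 - Complex.I • A⁻¹) ^ r)⁻¹ * S r *
      (((1 + Complex.I • Aᴴ⁻¹) ^ r)⁻¹))
    (G : Matrix (Fin n) (Fin n) ℂ)
    (hG : G = (A - Complex.I • 1)⁻¹ * (A + Complex.I • 1))
    (z : ℂ) (hzA : IsUnit (z • 1 + A).det) (k : ℕ) :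
    (1 - Complex.I • ((P k)ᴴ * (S k)⁻¹ * (A - (-z) • 1)⁻¹ * P k)) *
        (Matrix.fromRows 0 1 : Matrix (Fin m₁ ⊕ Fin m₂) (Fin m₂) ℂ) =
      Matrix.fromRows (0 : Matrix (Fin m₁) (Fin m₂) ℂ) 1 -
        Complex.I • Matrix.fromRows
          (θ₁ᴴ * ((G ^ k)ᴴ) * (Q k)⁻¹ * (z • 1 + A)⁻¹ * θ₂)
          (θ₂ᴴ * (Q k)⁻¹ * (z • 1 + A)⁻¹ * θ₂) := by
  set B : Matrix (Fin n) (Fin n) ℂ := 1 - Complex.I • A⁻¹ with hBdef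
  set C : Matrix (Fin n) (Fin n) ℂ := 1 + Complex.I • A⁻¹ with hCdef
  set Z : Matrix (Fin n) (Fin n) ℂ := z • 1 + A with hZdef
  -- invertibility of A - iI and A + iI
  have hAi : IsUnit (A - Complex.I • 1).det := by
    have h1 := spectrum.notMem_iff.mp hi
    rw [Algebra.algebraMap_eq_smul_one] at h1
    have h2 := h1.neg
    rw [neg_sub] at h2
    exact (Matrix.isUnit_iff_isUnit_det _).mp h2
  have hApi : IsUnit (A + Complex.I • 1).det := by
    have h1 := spectrum.notMem_iff.mp hmi
    rw [Algebra.algebraMap_eq_smul_one] at h1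
    have h2 := h1.neg
    rw [neg_sub, neg_smul, sub_neg_eq_add] at h2
    exact (Matrix.isUnit_iff_isUnit_det _).mp h2
  -- B and C in product form
  have hB : B = A⁻¹ * (A - Complex.I • 1) := by
    rw [hBdef, mul_sub, Matrix.nonsing_inv_mul _ hA, Matrix.mul_smul, mul_one]
  have hC : C = A⁻¹ * (A + Complex.I • 1) := by
    rw [hCdef, mul_add, Matrix.nonsing_inv_mul _ hA, Matrix.mul_smul, mul_one]
  have hBu : IsUnit B.det := by
    rw [hB, Matrix.det_mul]
    exact (A.isUnit_nonsing_inv_det hA).mul hAi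
  have hBku : IsUnit (B ^ k).det := by rw [Matrix.det_pow]; exact hBu.pow k
  have hBkHu : IsUnit ((B ^ k)ᴴ).det := by
    rw [Matrix.det_conjTranspose]; exact hBku.star
  have hSu : IsUnit (S k).det := (Matrix.isUnit_iff_isUnit_det _).mp (hSpos k).isUnit
  -- commutation facts
  have cAinvZ : Commute A⁻¹ Z := by
    rw [Commute, SemiconjBy, hZdef, mul_add, add_mul, Matrix.mul_smul,
      Matrix.smul_mul, mul_one, one_mul, Matrix.nonsing_inv_mul _ hA,
      Matrix.mul_nonsing_inv _ hA]
  have cBZ : Commute B Z :=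
    (Commute.one_left Z).sub_left (cAinvZ.smul_left Complex.I)
  have cBC : Commute B C :=
    (Commute.one_left C).sub_left
      (((Commute.one_right A⁻¹).add_right
        ((Commute.refl A⁻¹).smul_right Complex.I)).smul_left Complex.I)
  have cBkZinv : Commute (B ^ k) Z⁻¹ := aux_comm (cBZ.pow_left k) hzA
  -- Q⁻¹
  have hBH : 1 + Complex.I • Aᴴ⁻¹ = Bᴴ := by
    rw [hBdef, conjTranspose_sub, conjTranspose_smul, conjTranspose_one,
      A.conjTranspose_nonsing_inv, Complex.star_def, Complex.conj_I,
      neg_smul, sub_neg_eq_add]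
  have hQinv : (Q k)⁻¹ = (B ^ k)ᴴ * ((S k)⁻¹ * B ^ k) := by
    rw [hQ, hBH, ← conjTranspose_pow, Matrix.mul_inv_rev, Matrix.mul_inv_rev,
      Matrix.nonsing_inv_nonsing_inv _ hBku, Matrix.nonsing_inv_nonsing_inv _ hBkHu]
  -- G facts
  have hBG : B * G = C := by
    rw [hG, hB, hC, mul_assoc, ← mul_assoc (A - Complex.I • 1),
      Matrix.mul_nonsing_inv _ hAi, one_mul]
  have hGr : G = B⁻¹ * C := by
    rw [← hBG, ← mul_assoc, Matrix.nonsing_inv_mul _ hBu, one_mul]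
  have cBG : Commute B G := by
    rw [hGr]; exact (aux_comm (Commute.refl B) hBu).mul_right cBC
  have hCk : C ^ k = B ^ k * G ^ k := by rw [← hBG, cBG.mul_pow]
  -- rewrite the statement
  have hZ' : A - (-z) • (1 : Matrix (Fin n) (Fin n) ℂ) = Z := by
    rw [hZdef, neg_smul, sub_neg_eq_add, add_comm]
  rw [hPdef, hQinv, hZ', Matrix.conjTranspose_fromCols_eq_fromRows_conjTranspose,
    Matrix.sub_mul, Matrix.one_mul, Matrix.smul_mul,
    Matrix.mul_assoc _ _ (Matrix.fromRows 0 1),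
    Matrix.fromCols_mul_fromRows, Matrix.mul_zero, Matrix.mul_one, zero_add,
    Matrix.fromRows_mul, Matrix.fromRows_mul, Matrix.fromRows_mul]
  have hswap : B ^ k * (Z⁻¹ * θ₂) = Z⁻¹ * (B ^ k * θ₂) := by
    rw [← Matrix.mul_assoc, cBkZinv.eq, Matrix.mul_assoc]
  simp only [conjTranspose_mul, hCk, Matrix.mul_assoc, hswap]
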